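/- Let M ∈ ℝ^{m×n} be any real matrix, with positive and negative parts M₊ = max(0,M), M₋ = max(0,-M). Let P, N ≥ 0 be any other decomposition M = P - N. Fix w ∈ ℝⁿ₊ and v ∈ ℝᵐ₊, and define v₁ = v ∘ (M₊wᵀ)/(vwwᵀ + M₋wᵀ) and v₂ = v ∘ (Pwᵀ)/(vwwᵀ + Nwᵀ) (entrywise operations, denominators assumed positive). Then ||M - v₁w||_F ≤ ||M - v₂w||_F ≤ ||M - vw||_F. -/

import Mathlib

lemma quad_lemma {n : ℕ} (Mr w : Fin n → ℝ) (t₁ t₂ : ℝ)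
    (hE : 0 < ∑ j, (w j) ^ 2)
    (h : (t₁ - (∑ j, Mr j * w j) / (∑ j, (w j) ^ 2)) ^ 2
        ≤ (t₂ - (∑ j, Mr j * w j) / (∑ j, (w j) ^ 2)) ^ 2) :
    ∑ j, (Mr j - t₁ * w j) ^ 2 ≤ ∑ j, (Mr j - t₂ * w j) ^ 2 := by
  set E := ∑ j, (w j) ^ 2 with hEdef
  set S := ∑ j, Mr j * w j with hSdef
  have expand : ∀ t : ℝ, ∑ j, (Mr j - t * w j) ^ 2
      = (∑ j, (Mr j) ^ 2) - 2 * t * S + t ^ 2 * E := by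
    intro t
    rw [hSdef, hEdef, Finset.mul_sum, Finset.mul_sum, ← Finset.sum_sub_distrib,
      ← Finset.sum_add_distrib]
    exact Finset.sum_congr rfl fun j _ => by ring
  rw [expand t₁, expand t₂]
  have hEne : E ≠ 0 := ne_of_gt hE
  have h' : (t₁ * E - S) ^ 2 ≤ (t₂ * E - S) ^ 2 := by
    have h2 := mul_le_mul_of_nonneg_right h (sq_nonneg E)
    have e1 : (t₁ - S / E) ^ 2 * E ^ 2 = (t₁ * E - S) ^ 2 := by field_simp
    have e2 : (t₂ - S / E) ^ 2 * E ^ 2 = (t₂ * E - S) ^ 2 := by field_simp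
    rwa [e1, e2] at h2
  nlinarith [h', hE]

lemma key_sq (e a b q vi : ℝ) (hvi : 0 ≤ vi) (he : 0 < e)
    (ha : 0 ≤ a) (hb : 0 ≤ b) (hqb : b ≤ q)
    (hd1 : 0 < vi * e + b) (hd2 : 0 < vi * e + q) :
    (vi * a / (vi * e + b) - (a - b) / e) ^ 2
      ≤ (vi * (a + (q - b)) / (vi * e + q) - (a - b) / e) ^ 2 ∧
    (vi * (a + (q - b)) / (vi * e + q) - (a - b) / e) ^ 2
      ≤ (vi - (a - b) / e) ^ 2 := by
  rcases hvi.lt_or_eq with hlt | heq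
  · have he' : e ≠ 0 := ne_of_gt he
    have hd1' : vi * e + b ≠ 0 := ne_of_gt hd1
    have hd2' : vi * e + q ≠ 0 := ne_of_gt hd2
    have hE' : 0 < vi * e := mul_pos hlt he
    have h1 : vi * a / (vi * e + b) - (a - b) / e
        = ((vi * e + b - a) / e) * (b / (vi * e + b)) := by
      field_simp
      ring
    have h2 : vi * (a + (q - b)) / (vi * e + q) - (a - b) / e
        = ((vi * e + b - a) / e) * (q / (vi * e + q)) := by
      field_simp
      ring
    have h3 : vi - (a - b) / e = ((vi * e + b - a) / e) * 1 := by
      field_simp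
      ring
    have r1nn : 0 ≤ b / (vi * e + b) := div_nonneg hb hd1.le
    have r2nn : 0 ≤ q / (vi * e + q) := div_nonneg (hb.trans hqb) hd2.le
    have r12 : b / (vi * e + b) ≤ q / (vi * e + q) := by
      rw [div_le_div_iff₀ hd1 hd2]
      nlinarith [mul_nonneg (sub_nonneg.mpr hqb) hE'.le]
    have r21 : q / (vi * e + q) ≤ 1 := by
      rw [div_le_one hd2]; linarith
    constructor
    · rw [h1, h2, mul_pow, mul_pow]
      exact mul_le_mul_of_nonneg_left (pow_le_pow_left₀ r1nn r12 2) (sq_nonneg _)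
    · rw [h2, h3, mul_pow, mul_pow]
      have : (q / (vi * e + q)) ^ 2 ≤ (1 : ℝ) ^ 2 := pow_le_pow_left₀ r2nn r21 2
      exact mul_le_mul_of_nonneg_left this (sq_nonneg _)
  · subst heq
    norm_num

lemma max_sub_max (x : ℝ) : max 0 x - max 0 (-x) = x := by
  rcases le_total 0 x with h | h
  · rw [max_eq_right h, max_eq_left (by linarith : -x ≤ 0)]; ring
  · rw [max_eq_left h, max_eq_right (by linarith : 0 ≤ -x)]; ring

/-- The multiplicative update with P = M₊, N = M₋ is at least as good as
the one given by any other splitting M = P - N, which is at least as good as v. -/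
theorem stmt_7 (m n : ℕ) (M P N : Fin m → Fin n → ℝ)
    (hP : ∀ i j, 0 ≤ P i j) (hN : ∀ i j, 0 ≤ N i j)
    (hM : ∀ i j, M i j = P i j - N i j)
    (w : Fin n → ℝ) (hw : ∀ j, 0 ≤ w j)
    (v : Fin m → ℝ) (hv : ∀ i, 0 ≤ v i)
    (hden1 : ∀ i, 0 < v i * (∑ j, (w j) ^ 2) + ∑ j, max 0 (- M i j) * w j)
    (hden2 : ∀ i, 0 < v i * (∑ j, (w j) ^ 2) + ∑ j, N i j * w j)
    (v₁ v₂ : Fin m → ℝ)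
    (hv₁ : ∀ i, v₁ i = v i * (∑ j, max 0 (M i j) * w j)
        / (v i * (∑ j, (w j) ^ 2) + ∑ j, max 0 (- M i j) * w j))
    (hv₂ : ∀ i, v₂ i = v i * (∑ j, P i j * w j)
        / (v i * (∑ j, (w j) ^ 2) + ∑ j, N i j * w j)) :
    (∑ i, ∑ j, (M i j - v₁ i * w j) ^ 2 ≤ ∑ i, ∑ j, (M i j - v₂ i * w j) ^ 2) ∧
    (∑ i, ∑ j, (M i j - v₂ i * w j) ^ 2 ≤ ∑ i, ∑ j, (M i j - v i * w j) ^ 2) := by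
  rcases Nat.eq_zero_or_pos m with hm | hm
  · subst hm
    exact ⟨by simp, by simp⟩
  have hE : 0 < ∑ j, (w j) ^ 2 := by
    have hEnn : 0 ≤ ∑ j, (w j) ^ 2 := Finset.sum_nonneg fun j _ => sq_nonneg _
    rcases hEnn.lt_or_eq with h | h
    · exact h
    · exfalso
      have hw0 : ∀ j, w j = 0 := by
        intro j
        have := (Finset.sum_eq_zero_iff_of_nonneg
          (fun j _ => sq_nonneg (w j))).mp h.symm j (Finset.mem_univ j)
        exact pow_eq_zero_iff (by norm_num) |>.mp this
      have hc := hden1 ⟨0, hm⟩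
      simp [hw0] at hc
  -- per-row facts
  have rowfacts : ∀ i,
      ((v₁ i - (∑ j, M i j * w j) / (∑ j, (w j) ^ 2)) ^ 2
        ≤ (v₂ i - (∑ j, M i j * w j) / (∑ j, (w j) ^ 2)) ^ 2) ∧
      ((v₂ i - (∑ j, M i j * w j) / (∑ j, (w j) ^ 2)) ^ 2
        ≤ (v i - (∑ j, M i j * w j) / (∑ j, (w j) ^ 2)) ^ 2) := by
    intro i
    have ha : 0 ≤ ∑ j, max 0 (M i j) * w j :=
      Finset.sum_nonneg fun j _ => mul_nonneg (le_max_left _ _) (hw j)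
    have hb : 0 ≤ ∑ j, max 0 (-M i j) * w j :=
      Finset.sum_nonneg fun j _ => mul_nonneg (le_max_left _ _) (hw j)
    have hS : ∑ j, M i j * w j
        = (∑ j, max 0 (M i j) * w j) - ∑ j, max 0 (-M i j) * w j := by
      rw [← Finset.sum_sub_distrib]
      exact Finset.sum_congr rfl fun j _ => by
        rw [← sub_mul, max_sub_max]
    have hqb : (∑ j, max 0 (-M i j) * w j) ≤ ∑ j, N i j * w j :=
      Finset.sum_le_sum fun j _ => mul_le_mul_of_nonneg_right
        (max_le (hN i j) (by have := hM i j; have := hP i j; linarith)) (hw j)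
    have hpq : (∑ j, P i j * w j) - (∑ j, N i j * w j)
        = (∑ j, max 0 (M i j) * w j) - ∑ j, max 0 (-M i j) * w j := by
      rw [← Finset.sum_sub_distrib, ← Finset.sum_sub_distrib]
      exact Finset.sum_congr rfl fun j _ => by
        rw [← sub_mul, ← sub_mul, max_sub_max, ← hM i j]
    have hPsum : (∑ j, P i j * w j)
        = (∑ j, max 0 (M i j) * w j)
          + ((∑ j, N i j * w j) - ∑ j, max 0 (-M i j) * w j) := by linarith
    have key := key_sq (∑ j, (w j) ^ 2) (∑ j, max 0 (M i j) * w j)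
      (∑ j, max 0 (-M i j) * w j) (∑ j, N i j * w j) (v i)
      (hv i) hE ha hb hqb (hden1 i) (hden2 i)
    constructor
    · rw [hv₁ i, hv₂ i, hS, hPsum]
      exact key.1
    · rw [hv₂ i, hS, hPsum]
      exact key.2
  constructor
  · exact Finset.sum_le_sum fun i _ => quad_lemma (M i) w (v₁ i) (v₂ i) hE (rowfacts i).1
  · exact Finset.sum_le_sum fun i _ => quad_lemma (M i) w (v₂ i) (v i) hE (rowfacts i).2
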